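/- arXiv:1711.03063 — 6 statements merged into one kernel-verified Lean document; each statement's English description precedes it below -/
import Mathlib

section
/- Let K be a category with an initial object I and a terminal object F, and let (E,M) be a factorization system on K. Let Min be the middle object of the (E,M)-factorization of the unique morphism I → F. Then Min is (E,M)-minimal in K: for every object X of K, Min (E,M)-divides X, i.e., there exist an object Z of K, a morphism Z → X belonging to M, and a morphism Z → Min belonging to E. -/
open CategoryTheory CategoryTheory.Limits

universe v u

/-- A factorization system `(E, M)` on a category `K`: both classes contain all isomorphisms
and are closed under composition, every morphism factors as an `E`-morphism followed by an
`M`-morphism (with a chosen middle object `mid f`), and unique diagonal fill-ins exist. -/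
structure FactorizationSystem (K : Type u) [Category.{v} K] where
  E : MorphismProperty K
  M : MorphismProperty K
  E_iso : ∀ {X Y : K} (f : X ⟶ Y), IsIso f → E f
  M_iso : ∀ {X Y : K} (f : X ⟶ Y), IsIso f → M f
  E_comp : ∀ {X Y Z : K} (f : X ⟶ Y) (g : Y ⟶ Z), E f → E g → E (f ≫ g)
  M_comp : ∀ {X Y Z : K} (f : X ⟶ Y) (g : Y ⟶ Z), M f → M g → M (f ≫ g)
  mid : ∀ {X Y : K}, (X ⟶ Y) → K
  e : ∀ {X Y : K} (f : X ⟶ Y), X ⟶ mid f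
  m : ∀ {X Y : K} (f : X ⟶ Y), mid f ⟶ Y
  e_mem : ∀ {X Y : K} (f : X ⟶ Y), E (e f)
  m_mem : ∀ {X Y : K} (f : X ⟶ Y), M (m f)
  fac : ∀ {X Y : K} (f : X ⟶ Y), e f ≫ m f = f
  diagonal : ∀ {X Y X' Y' : K} (u : X ⟶ Y) (v : X' ⟶ Y') (f : X ⟶ X') (g : Y ⟶ Y'),
    E u → M v → u ≫ g = f ≫ v → ∃! d : Y ⟶ X', u ≫ d = f ∧ d ≫ v = g

/-- Left cancellation for `E`: if `f ∈ E` and `f ≫ g ∈ E` then `g ∈ E`. -/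
theorem FactorizationSystem.E_cancel {K : Type u} [Category.{v} K]
    (FS : FactorizationSystem K) {A B C : K} (f : A ⟶ B) (g : B ⟶ C)
    (hf : FS.E f) (hfg : FS.E (f ≫ g)) : FS.E g := by
  -- factor g
  have hfac := FS.fac g
  obtain ⟨d, ⟨hd1, hd2⟩, _⟩ := FS.diagonal (f ≫ g) (FS.m g) (f ≫ FS.e g) (𝟙 C)
    hfg (FS.m_mem g) (by simp [← hfac])
  -- show m g ≫ d = 𝟙 _ by uniqueness of diagonal
  obtain ⟨d', _, huniq⟩ := FS.diagonal (f ≫ FS.e g) (FS.m g) (f ≫ FS.e g) (FS.m g)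
    (FS.E_comp _ _ hf (FS.e_mem g)) (FS.m_mem g) (by simp)
  have h1 : FS.m g ≫ d = 𝟙 _ := by
    have ha := huniq (FS.m g ≫ d) ⟨by rw [← Category.assoc, Category.assoc f, hfac, hd1], by
      rw [Category.assoc, hd2, Category.comp_id]⟩
    have hb := huniq (𝟙 _) ⟨Category.comp_id _, Category.id_comp _⟩
    rw [ha, hb]
  have : IsIso (FS.m g) := ⟨d, h1, hd2⟩
  have := FS.E_iso (FS.m g) this
  rw [← hfac]
  exact FS.E_comp _ _ (FS.e_mem g) this


/-- `Min`, the middle object of the `(E,M)`-factorization of the unique morphism from the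
initial to the terminal object, is `(E,M)`-minimal: it `(E,M)`-divides every object `X`,
i.e. it is an `E`-quotient of an `M`-subobject of `X`. -/

theorem minimal_divides_every_object (K : Type u) [Category.{v} K]
    [HasInitial K] [HasTerminal K] (FS : FactorizationSystem K) (X : K) :
    ∃ (Z : K) (mm : Z ⟶ X) (ee : Z ⟶ FS.mid (initial.to (⊤_ K) : (⊥_ K) ⟶ ⊤_ K)),
      FS.M mm ∧ FS.E ee := by
  set f : (⊥_ K) ⟶ ⊤_ K := initial.to (⊤_ K)
  set g : (⊥_ K) ⟶ X := initial.to X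
  obtain ⟨d, ⟨hd1, hd2⟩, _⟩ := FS.diagonal (FS.e g) (FS.m f) (FS.e f) (terminal.from _)
    (FS.e_mem g) (FS.m_mem f) (by apply initial.hom_ext)
  exact ⟨FS.mid g, FS.m g, d, FS.m_mem g, FS.E_cancel (FS.e g) d (FS.e_mem g)
    (by rw [hd1]; exact FS.e_mem f)⟩
end

section
/- Let K be a category with an initial object I and a terminal object F, and let (E,M) be a factorization system on K. Let Min be the middle object of the (E,M)-factorization of the unique morphism I → F; for an object X let Reach(X) be the middle object of the factorization of the unique morphism I → X and Obs(X) the middle object of the factorization of the unique morphism X → F. Then for every object X of K, Min is isomorphic to Obs(Reach(X)) and Min is isomorphic to Reach(Obs(X)). -/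
open CategoryTheory CategoryTheory.Limits

universe v u

variable {K : Type u} [Category.{v} K]

/-- `Reach X`: the middle object of the factorization of the unique morphism `I ⟶ X`. -/
noncomputable def FactorizationSystem.Reach [HasInitial K] (FS : FactorizationSystem K)
    (X : K) : K := FS.mid (initial.to X)

/-- `Obs X`: the middle object of the factorization of the unique morphism `X ⟶ F`. -/
noncomputable def FactorizationSystem.Obs [HasTerminal K] (FS : FactorizationSystem K)
    (X : K) : K := FS.mid (terminal.from X)

/-- Any two `(E,M)`-factorizations of the same morphism have isomorphic middle objects. -/
theorem FactorizationSystem.fact_iso (FS : FactorizationSystem K)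
    {X Y Z₁ Z₂ : K} (e₁ : X ⟶ Z₁) (m₁ : Z₁ ⟶ Y) (e₂ : X ⟶ Z₂) (m₂ : Z₂ ⟶ Y)
    (he₁ : FS.E e₁) (hm₁ : FS.M m₁) (he₂ : FS.E e₂) (hm₂ : FS.M m₂)
    (h : e₁ ≫ m₁ = e₂ ≫ m₂) : Nonempty (Z₁ ≅ Z₂) := by
  obtain ⟨d, ⟨hd1, hd2⟩, -⟩ := FS.diagonal e₁ m₂ e₂ m₁ he₁ hm₂ h
  obtain ⟨d', ⟨hd'1, hd'2⟩, -⟩ := FS.diagonal e₂ m₁ e₁ m₂ he₂ hm₁ h.symm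
  obtain ⟨i, -, hi⟩ := FS.diagonal e₁ m₁ e₁ m₁ he₁ hm₁ rfl
  obtain ⟨i', -, hi'⟩ := FS.diagonal e₂ m₂ e₂ m₂ he₂ hm₂ rfl
  exact ⟨⟨d, d',
    by rw [hi (d ≫ d') ⟨by rw [← Category.assoc, hd1, hd'1], by rw [Category.assoc, hd'2, hd2]⟩,
       hi (𝟙 _) ⟨Category.comp_id _, Category.id_comp _⟩],
    by rw [hi' (d' ≫ d) ⟨by rw [← Category.assoc, hd'1, hd1], by rw [Category.assoc, hd2, hd'2]⟩,
       hi' (𝟙 _) ⟨Category.comp_id _, Category.id_comp _⟩]⟩⟩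

/-- For every object `X`, the minimal object `Min` (the middle object of the factorization
of the unique morphism from the initial to the terminal object) is isomorphic to both
`Obs (Reach X)` and `Reach (Obs X)`. -/
theorem min_iso_obs_reach_and_reach_obs [HasInitial K] [HasTerminal K]
    (FS : FactorizationSystem K) (X : K) :
    Nonempty (FS.mid (initial.to (⊤_ K) : (⊥_ K) ⟶ ⊤_ K) ≅ FS.Obs (FS.Reach X)) ∧
    Nonempty (FS.mid (initial.to (⊤_ K) : (⊥_ K) ⟶ ⊤_ K) ≅ FS.Reach (FS.Obs X)) := by
  constructor
  · exact FS.fact_iso (FS.e (initial.to (⊤_ K))) (FS.m (initial.to (⊤_ K)))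
      (FS.e (initial.to X) ≫ FS.e (terminal.from (FS.Reach X)))
      (FS.m (terminal.from (FS.Reach X)))
      (FS.e_mem _) (FS.m_mem _)
      (FS.E_comp _ _ (FS.e_mem _) (FS.e_mem _)) (FS.m_mem _)
      (by rw [FS.fac]; apply Subsingleton.elim)
  · exact FS.fact_iso (FS.e (initial.to (⊤_ K))) (FS.m (initial.to (⊤_ K)))
      (FS.e (initial.to (FS.Obs X)))
      (FS.m (initial.to (FS.Obs X)) ≫ FS.m (terminal.from X))
      (FS.e_mem _) (FS.m_mem _)
      (FS.e_mem _) (FS.M_comp _ _ (FS.m_mem _) (FS.m_mem _))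
      (by rw [FS.fac]; apply Subsingleton.elim)
end

section
/- Let C be a category with a factorization system (E,M), let A be an alphabet, and let L : O_A → C be a C-language. Define E_Aut to be the class of morphisms of Auto(L) all of whose components (as natural transformations of functors I_A → C) belong to E, and M_Aut the class of morphisms of Auto(L) all of whose components belong to M. Then (E_Aut, M_Aut) is a factorization system on Auto(L). -/
open CategoryTheory CategoryTheory.Limits

universe v u

/-! ### The input category `I_A` of word automata -/

inductive WObj (A : Type) : Type where
  | left | center | right

inductive WEdge {A : Type} : WObj A → WObj A → Type where
  | tri : WEdge WObj.left WObj.center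
  | letter (a : A) : WEdge WObj.center WObj.center
  | tril : WEdge WObj.center WObj.right

instance (A : Type) : Quiver (WObj A) := ⟨WEdge⟩

/-- `I_A`: the free category on the graph `left -▷→ center -a→ center -◁→ right`. -/
def IA (A : Type) : Type := Paths (WObj A)

instance (A : Type) : Category (IA A) :=
  inferInstanceAs (Category (Paths (WObj A)))

def IA.l (A : Type) : IA A := WObj.left
def IA.c (A : Type) : IA A := WObj.center
def IA.r (A : Type) : IA A := WObj.right

/-- The generating morphism `▷ : left ⟶ center`. -/
def IA.tri (A : Type) : IA.l A ⟶ IA.c A := Quiver.Hom.toPath WEdge.tri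
/-- The generating morphism `a : center ⟶ center` for a letter `a`. -/
def IA.letter {A : Type} (a : A) : IA.c A ⟶ IA.c A := Quiver.Hom.toPath (WEdge.letter a)
/-- The generating morphism `◁ : center ⟶ right`. -/
def IA.tril (A : Type) : IA.c A ⟶ IA.r A := Quiver.Hom.toPath WEdge.tril

/-- The word spelled by a path in the graph (the sequence of `letter` edges used). -/
def toWord {A : Type} : ∀ {X Y : WObj A}, Quiver.Path X Y → List A
  | _, _, Quiver.Path.nil => []
  | _, _, Quiver.Path.cons p e =>
      toWord p ++ (match e with
        | WEdge.letter a => [a]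
        | _ => [])

/-- The path `center → center` spelling a word `w`. -/
def pathCC {A : Type} : List A → ((IA.c A) ⟶ (IA.c A))
  | [] => Quiver.Path.nil
  | a :: w => (Quiver.Hom.toPath (WEdge.letter a)).comp (pathCC w)

/-- The path `▷ w ◁ : left ⟶ right` spelling a word `w`. -/
def pathLR {A : Type} (w : List A) : (IA.l A) ⟶ (IA.r A) :=
  IA.tri A ≫ pathCC w ≫ IA.tril A

theorem path_from_right {A : Type} : ∀ {Z : WObj A},
    Quiver.Path (WObj.right : WObj A) Z → Z = WObj.right
  | _, Quiver.Path.nil => rfl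
  | _, Quiver.Path.cons p e => by
      have h := path_from_right p
      subst h
      exact nomatch e

theorem path_ll_nil {A : Type} (p : Quiver.Path (WObj.left : WObj A) WObj.left) :
    p = Quiver.Path.nil := by
  cases p with
  | nil => rfl
  | cons q e => exact nomatch e

theorem path_rr_nil {A : Type} (p : Quiver.Path (WObj.right : WObj A) WObj.right) :
    p = Quiver.Path.nil := by
  cases p with
  | nil => rfl
  | cons q e =>
      have h := path_from_right q
      subst h
      exact nomatch e

theorem path_rl_false {A : Type} (p : Quiver.Path (WObj.right : WObj A) WObj.left) :
    False := by
  have := path_from_right p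
  exact nomatch this

/-- `O_A`: the full subcategory of `I_A` on the objects `left` and `right`. -/
def OA (A : Type) : Type := ObjectProperty.FullSubcategory (fun X : IA A => X ≠ IA.c A)

instance (A : Type) : Category (OA A) :=
  inferInstanceAs (Category (ObjectProperty.FullSubcategory (fun X : IA A => X ≠ IA.c A)))

/-- The inclusion functor `ι : O_A ⥤ I_A`. -/
def OA.inc (A : Type) : OA A ⥤ IA A := ObjectProperty.ι _

def OA.l (A : Type) : OA A := ⟨IA.l A, fun h => nomatch (show (WObj.left : WObj A) = WObj.center from h)⟩
def OA.r (A : Type) : OA A := ⟨IA.r A, fun h => nomatch (show (WObj.right : WObj A) = WObj.center from h)⟩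

/-- The morphism `▷ w ◁ : left ⟶ right` of `O_A`. -/
def OA.word {A : Type} (w : List A) : OA.l A ⟶ OA.r A := ⟨pathLR w⟩

/-- The language `O_A ⥤ C` determined by two objects `LI`, `LO` of `C` and a function
assigning to every word `w ∈ A*` a morphism `LI ⟶ LO` (the value at `▷w◁`). -/
def mkLang {A : Type} {C : Type u} [Category.{v} C] (LI LO : C)
    (f : List A → (LI ⟶ LO)) : OA A ⥤ C where
  obj X :=
    match X with
    | ⟨WObj.left, _⟩ => LI
    | ⟨WObj.right, _⟩ => LO
    | ⟨WObj.center, h⟩ => absurd rfl h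
  map {X Y} p :=
    match X, Y, p with
    | ⟨WObj.left, _⟩, ⟨WObj.left, _⟩, _ => 𝟙 LI
    | ⟨WObj.left, _⟩, ⟨WObj.right, _⟩, p => f (toWord p.hom)
    | ⟨WObj.right, _⟩, ⟨WObj.right, _⟩, _ => 𝟙 LO
    | ⟨WObj.right, _⟩, ⟨WObj.left, _⟩, p => (path_rl_false p.hom).elim
    | ⟨WObj.center, h⟩, _, _ => absurd rfl h
    | _, ⟨WObj.center, h⟩, _ => absurd rfl h
  map_id X := by
    rcases X with ⟨(_|_|_), hX⟩
    · rfl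
    · exact absurd rfl hX
    · rfl
  map_comp {X Y Z} p q := by
    rcases p with ⟨p⟩
    rcases q with ⟨q⟩
    rcases X with ⟨(_|_|_), hX⟩ <;> rcases Y with ⟨(_|_|_), hY⟩ <;>
      rcases Z with ⟨(_|_|_), hZ⟩ <;>
      first
        | exact absurd rfl hX
        | exact absurd rfl hY
        | exact absurd rfl hZ
        | exact (path_rl_false p).elim
        | exact (path_rl_false q).elim
        | exact (Category.id_comp _).symm
        | (have hp := path_ll_nil (p : Quiver.Path (WObj.left : WObj A) WObj.left)
           subst hp
           show f (toWord (Quiver.Path.comp Quiver.Path.nil (q : Quiver.Path (WObj.left : WObj A) WObj.right))) =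
             𝟙 LI ≫ f (toWord (q : Quiver.Path (WObj.left : WObj A) WObj.right))
           exact (congrArg (fun r => f (toWord r)) (Quiver.Path.nil_comp _)).trans
             (Category.id_comp _).symm)
        | (have hq := path_rr_nil (q : Quiver.Path (WObj.right : WObj A) WObj.right)
           subst hq
           show f (toWord (Quiver.Path.comp p Quiver.Path.nil)) = f (toWord p) ≫ 𝟙 LO
           exact (Category.comp_id _).symm)

/-- A `C`-automaton `M` accepts the `C`-language `L` when `ι ⋙ M = L`. -/
def Accepts {A : Type} {C : Type u} [Category.{v} C] (M : IA A ⥤ C) (L : OA A ⥤ C) : Prop :=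
  OA.inc A ⋙ M = L

/-- The category `Auto(L)` of `C`-automata accepting the language `L`; morphisms are
natural transformations whose whiskering along `ι` is the identity of `L`. -/
def Auto (A : Type) {C : Type u} [Category.{v} C] (L : OA A ⥤ C) : Type _ :=
  { M : IA A ⥤ C // Accepts M L }

instance (A : Type) {C : Type u} [Category.{v} C] (L : OA A ⥤ C) :
    Category (Auto A L) where
  Hom M N := { α : M.1 ⟶ N.1 //
    CategoryTheory.Functor.whiskerLeft (OA.inc A) α = eqToHom (M.2.trans N.2.symm) }
  id M := ⟨𝟙 M.1, by simp⟩
  comp {M N P} f g := ⟨f.1 ≫ g.1, by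
    rw [CategoryTheory.Functor.whiskerLeft_comp, f.2, g.2, eqToHom_trans]⟩
  id_comp f := Subtype.ext (Category.id_comp _)
  comp_id f := Subtype.ext (Category.comp_id _)
  assoc f g h := Subtype.ext (Category.assoc _ _ _)

/-- The functor `St : Auto(L) ⥤ C` evaluating an automaton at the object `center`. -/
def St (A : Type) {C : Type u} [Category.{v} C] (L : OA A ⥤ C) : Auto A L ⥤ C where
  obj M := M.1.obj (IA.c A)
  map f := f.1.app (IA.c A)
  map_id _ := rfl
  map_comp _ _ := rfl

/-- The underlying natural transformation of a morphism in `Auto(L)`. -/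
def Auto.nat {A : Type} {C : Type u} [Category.{v} C] {L : OA A ⥤ C} {M N : Auto A L}
    (α : M ⟶ N) : M.1 ⟶ N.1 :=
  (show { β : M.1 ⟶ N.1 //
      CategoryTheory.Functor.whiskerLeft (OA.inc A) β = eqToHom (M.2.trans N.2.symm) } from α).1

/-- The property that two classes of morphisms `(E, M)` form a factorization system on `K`:
both contain all isomorphisms, are closed under composition, every morphism factors as an
`E`-morphism followed by an `M`-morphism, and unique diagonal fill-ins exist. -/
structure IsFactorizationSystem (K : Type u) [Category.{v} K]
    (E M : MorphismProperty K) : Prop where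
  E_iso : ∀ {X Y : K} (f : X ⟶ Y), IsIso f → E f
  M_iso : ∀ {X Y : K} (f : X ⟶ Y), IsIso f → M f
  E_comp : ∀ {X Y Z : K} (f : X ⟶ Y) (g : Y ⟶ Z), E f → E g → E (f ≫ g)
  M_comp : ∀ {X Y Z : K} (f : X ⟶ Y) (g : Y ⟶ Z), M f → M g → M (f ≫ g)
  fac : ∀ {X Y : K} (f : X ⟶ Y), ∃ (Z : K) (e : X ⟶ Z) (m : Z ⟶ Y),
    E e ∧ M m ∧ e ≫ m = f
  diagonal : ∀ {X Y X' Y' : K} (u : X ⟶ Y) (v : X' ⟶ Y') (f : X ⟶ X') (g : Y ⟶ Y'),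
    E u → M v → u ≫ g = f ≫ v → ∃! d : Y ⟶ X', u ≫ d = f ∧ d ≫ v = g


/-! ### Auxiliary machinery -/

section Helpers

variable {A : Type} {C : Type u} [Category.{v} C]

/-- The defining condition of a morphism of `Auto(L)`. -/
theorem Auto.cond {L : OA A ⥤ C} {M N : Auto A L} (α : M ⟶ N) :
    CategoryTheory.Functor.whiskerLeft (OA.inc A) (Auto.nat α) = eqToHom (M.2.trans N.2.symm) :=
  (show { β : M.1 ⟶ N.1 //
      CategoryTheory.Functor.whiskerLeft (OA.inc A) β = eqToHom (M.2.trans N.2.symm) } from α).2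

/-- Construct a morphism of `Auto(L)` from a natural transformation. -/
def Auto.mkHom {L : OA A ⥤ C} (M N : Auto A L) (β : M.1 ⟶ N.1)
    (h : CategoryTheory.Functor.whiskerLeft (OA.inc A) β = eqToHom (M.2.trans N.2.symm)) :
    M ⟶ N := ⟨β, h⟩

theorem Auto.nat_mkHom {L : OA A ⥤ C} (M N : Auto A L) (β : M.1 ⟶ N.1)
    (h : CategoryTheory.Functor.whiskerLeft (OA.inc A) β = eqToHom (M.2.trans N.2.symm)) :
    Auto.nat (Auto.mkHom M N β h) = β := rfl

theorem Auto.hom_ext {L : OA A ⥤ C} {M N : Auto A L} {α β : M ⟶ N}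
    (h : Auto.nat α = Auto.nat β) : α = β :=
  Subtype.ext h

theorem Auto.nat_comp {L : OA A ⥤ C} {M N P : Auto A L} (α : M ⟶ N) (β : N ⟶ P) :
    Auto.nat (α ≫ β) = Auto.nat α ≫ Auto.nat β := rfl

theorem Auto.nat_id {L : OA A ⥤ C} (M : Auto A L) : Auto.nat (𝟙 M) = 𝟙 M.1 := rfl

/-- The boundary components (at `left` and `right`) of any morphism of automata are
`eqToHom`s. -/
theorem Auto.app_boundary {L : OA A ⥤ C} {M N : Auto A L} (α : M ⟶ N)
    (T : IA A) (hT : T ≠ IA.c A) :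
    (Auto.nat α).app T =
      eqToHom (Functor.congr_obj (M.2.trans N.2.symm) ⟨T, hT⟩) := by
  have h := congr_app (Auto.cond α) ⟨T, hT⟩
  erw [eqToHom_app] at h
  exact h

theorem Auto.isIso_boundary {L : OA A ⥤ C} {M N : Auto A L} (α : M ⟶ N)
    (T : IA A) (hT : T ≠ IA.c A) : IsIso ((Auto.nat α).app T) := by
  rw [Auto.app_boundary α T hT]
  exact (eqToIso (Functor.congr_obj (M.2.trans N.2.symm) ⟨T, hT⟩)).isIso_hom

/-- Build a whisker-condition proof from componentwise boundary data. -/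
theorem Auto.whisker_cond {L : OA A ⥤ C} (M N : Auto A L) (β : M.1 ⟶ N.1)
    (h : ∀ T : OA A, β.app T.1 =
      eqToHom (Functor.congr_obj (M.2.trans N.2.symm) T)) :
    CategoryTheory.Functor.whiskerLeft (OA.inc A) β = eqToHom (M.2.trans N.2.symm) := by
  apply NatTrans.ext
  funext T
  rw [eqToHom_app]
  exact h T

/-- Natural transformations between functors out of a path category can be built from
naturality on single edges. -/
def pathsNT {V : Type} [Quiver.{0} V] {F G : Paths V ⥤ C}
    (app : ∀ X : V, F.obj X ⟶ G.obj X)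
    (h : ∀ {X Y : V} (e : X ⟶ Y),
      F.map e.toPath ≫ app Y = app X ≫ G.map e.toPath) : F ⟶ G where
  app := app
  naturality X Y p := by
    change @Quiver.Path V _ X Y at p
    induction p with
    | nil =>
        show F.map (𝟙 _) ≫ _ = _ ≫ G.map (𝟙 _)
        simp
    | cons q e ih =>
        show F.map (_ ≫ Quiver.Hom.toPath e) ≫ _ = _ ≫ G.map (_ ≫ Quiver.Hom.toPath e)
        erw [F.map_comp, G.map_comp, Category.assoc, h e, ← Category.assoc, ih,
          Category.assoc]

/-- The middle prefunctor of the factorization of a morphism of automata. -/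
def midPhi (S : C) (P : IA A ⥤ C) (et : P.obj (IA.l A) ⟶ S)
    (dl : A → (S ⟶ S)) (dr : S ⟶ P.obj (IA.r A)) : Prefunctor (WObj A) C where
  obj X := match X with
    | WObj.center => S
    | WObj.left => P.obj (IA.l A)
    | WObj.right => P.obj (IA.r A)
  map {X Y} e := match X, Y, e with
    | _, _, WEdge.tri => et
    | _, _, WEdge.letter a => dl a
    | _, _, WEdge.tril => dr

end Helpers

/-- Lemma: a factorization system `(E, M)` on `C` lifts to a factorization system
`(E_Aut, M_Aut)` on the category `Auto(L)` of automata accepting a language `L : O_A ⥤ C`,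
where a morphism of automata lies in `E_Aut` (resp. `M_Aut`) iff all of its components lie
in `E` (resp. `M`). -/
theorem lift_factorization_system_to_automata {A : Type} {C : Type u} [Category.{v} C]
    (E M : MorphismProperty C) (hEM : IsFactorizationSystem C E M) (L : OA A ⥤ C) :
    IsFactorizationSystem (Auto A L)
      (fun _ _ α => ∀ X : IA A, E ((Auto.nat α).app X))
      (fun _ _ α => ∀ X : IA A, M ((Auto.nat α).app X)) := by
  classical
  constructor
  case E_iso =>
    intro P Q f hf X
    apply hEM.E_iso
    refine ⟨(Auto.nat (inv f)).app X, ?_, ?_⟩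
    · exact congr_fun (congrArg NatTrans.app (congrArg Auto.nat (IsIso.hom_inv_id f))) X
    · exact congr_fun (congrArg NatTrans.app (congrArg Auto.nat (IsIso.inv_hom_id f))) X
  case M_iso =>
    intro P Q f hf X
    apply hEM.M_iso
    refine ⟨(Auto.nat (inv f)).app X, ?_, ?_⟩
    · exact congr_fun (congrArg NatTrans.app (congrArg Auto.nat (IsIso.hom_inv_id f))) X
    · exact congr_fun (congrArg NatTrans.app (congrArg Auto.nat (IsIso.inv_hom_id f))) X
  case E_comp =>
    intro P Q R f g hf hg X
    exact hEM.E_comp _ _ (hf X) (hg X)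
  case M_comp =>
    intro P Q R f g hf hg X
    exact hEM.M_comp _ _ (hf X) (hg X)
  case fac =>
    intro P Q α
    set αn := Auto.nat α with hαn
    obtain ⟨S, ec, mc, hec, hmc, hfac⟩ := hEM.fac (αn.app (IA.c A))
    -- diagonal fill-ins for the letters
    have hletter : ∀ a : A, ∃! d : S ⟶ S,
        ec ≫ d = P.1.map (IA.letter a) ≫ ec ∧ d ≫ mc = mc ≫ Q.1.map (IA.letter a) := by
      intro a
      refine hEM.diagonal ec mc _ _ hec hmc ?_
      calc ec ≫ mc ≫ Q.1.map (IA.letter a)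
          = (ec ≫ mc) ≫ Q.1.map (IA.letter a) := by rw [Category.assoc]
        _ = αn.app (IA.c A) ≫ Q.1.map (IA.letter a) := by rw [hfac]
        _ = P.1.map (IA.letter a) ≫ αn.app (IA.c A) := (αn.naturality _).symm
        _ = P.1.map (IA.letter a) ≫ ec ≫ mc := by rw [hfac]
        _ = (P.1.map (IA.letter a) ≫ ec) ≫ mc := by rw [Category.assoc]
    choose dl hdl using fun a => (hletter a).exists
    -- diagonal fill-in for ◁
    have hvr : M (αn.app (IA.r A)) :=
      hEM.M_iso _ (Auto.isIso_boundary α (IA.r A) (fun h => nomatch (show (WObj.right : WObj A) = WObj.center from h)))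
    have htril : ∃! d : S ⟶ P.1.obj (IA.r A),
        ec ≫ d = P.1.map (IA.tril A) ∧
        d ≫ αn.app (IA.r A) = mc ≫ Q.1.map (IA.tril A) := by
      refine hEM.diagonal ec (αn.app (IA.r A)) _ _ hec hvr ?_
      calc ec ≫ mc ≫ Q.1.map (IA.tril A)
          = (ec ≫ mc) ≫ Q.1.map (IA.tril A) := by rw [Category.assoc]
        _ = αn.app (IA.c A) ≫ Q.1.map (IA.tril A) := by rw [hfac]
        _ = P.1.map (IA.tril A) ≫ αn.app (IA.r A) := (αn.naturality _).symm
    obtain ⟨dr, ⟨hdr1, hdr2⟩, -⟩ := htril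
    -- the middle automaton
    let φ : Prefunctor (WObj A) C := midPhi S P.1 (P.1.map (IA.tri A) ≫ ec) dl dr
    let R : IA A ⥤ C := Paths.lift φ
    have hRtri : R.map (IA.tri A) = P.1.map (IA.tri A) ≫ ec := Paths.lift_toPath φ _
    have hRletter : ∀ a : A, R.map (IA.letter a) = dl a := fun a => Paths.lift_toPath φ _
    have hRtril : R.map (IA.tril A) = dr := Paths.lift_toPath φ _
    -- the two natural transformations
    let eN : P.1 ⟶ R := pathsNT (V := WObj A)
      (fun X => match X with
        | WObj.center => ec
        | WObj.left => 𝟙 _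
        | WObj.right => 𝟙 _)
      (by
        intro X Y e
        change WEdge X Y at e
        cases e with
        | tri =>
            show P.1.map (IA.tri A) ≫ ec = 𝟙 _ ≫ R.map (IA.tri A)
            erw [hRtri, Category.id_comp]
        | letter a =>
            show P.1.map (IA.letter a) ≫ ec = ec ≫ R.map (IA.letter a)
            erw [hRletter a, (hdl a).1]
        | tril =>
            show P.1.map (IA.tril A) ≫ 𝟙 _ = ec ≫ R.map (IA.tril A)
            erw [hRtril, hdr1, Category.comp_id])
    let mN : R ⟶ Q.1 := pathsNT (V := WObj A)
      (fun X => match X with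
        | WObj.center => mc
        | WObj.left => αn.app (IA.l A)
        | WObj.right => αn.app (IA.r A))
      (by
        intro X Y e
        change WEdge X Y at e
        cases e with
        | tri =>
            show R.map (IA.tri A) ≫ mc = αn.app (IA.l A) ≫ Q.1.map (IA.tri A)
            erw [hRtri, Category.assoc, hfac]
            exact αn.naturality _
        | letter a =>
            show R.map (IA.letter a) ≫ mc = mc ≫ Q.1.map (IA.letter a)
            erw [hRletter a, (hdl a).2]
        | tril =>
            show R.map (IA.tril A) ≫ αn.app (IA.r A) = mc ≫ Q.1.map (IA.tril A)
            erw [hRtril, hdr2])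
    -- R accepts L
    have hRP : OA.inc A ⋙ R = OA.inc A ⋙ P.1 := by
      refine CategoryTheory.Functor.hext ?_ ?_
      · rintro ⟨(_ | _ | _), hX⟩
        · rfl
        · exact absurd rfl hX
        · rfl
      · rintro ⟨(_ | _ | _), hX⟩ ⟨(_ | _ | _), hY⟩ ⟨p⟩
        · have hp := path_ll_nil p
          subst hp
          show HEq (R.map (𝟙 (IA.l A))) (P.1.map (𝟙 (IA.l A)))
          rw [R.map_id, P.1.map_id]
          exact HEq.rfl
        · exact absurd rfl hY
        · -- left ⟶ right: use naturality of eN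
          have h := eN.naturality p
          have h' : P.1.map p ≫ 𝟙 _ = 𝟙 _ ≫ R.map p := h
          rw [Category.comp_id, Category.id_comp] at h'
          show HEq (R.map p) (P.1.map p)
          rw [h']
          exact HEq.rfl
        · exact absurd rfl hX
        · exact absurd rfl hX
        · exact absurd rfl hX
        · exact (path_rl_false p).elim
        · exact absurd rfl hY
        · have hp := path_rr_nil p
          subst hp
          show HEq (R.map (𝟙 (IA.r A))) (P.1.map (𝟙 (IA.r A)))
          rw [R.map_id, P.1.map_id]
          exact HEq.rfl
    have hR : Accepts R L := hRP.trans P.2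
    let Rauto : Auto A L := ⟨R, hR⟩
    -- package the two morphisms
    have econd : CategoryTheory.Functor.whiskerLeft (OA.inc A) eN =
        eqToHom (P.2.trans Rauto.2.symm) := by
      refine Auto.whisker_cond P Rauto eN ?_
      rintro ⟨(_ | _ | _), hT⟩
      · exact rfl
      · exact absurd rfl hT
      · exact rfl
    have mcond : CategoryTheory.Functor.whiskerLeft (OA.inc A) mN =
        eqToHom (Rauto.2.trans Q.2.symm) := by
      refine Auto.whisker_cond Rauto Q mN ?_
      rintro ⟨(_ | _ | _), hT⟩
      · exact Auto.app_boundary α (IA.l A) hT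
      · exact absurd rfl hT
      · exact Auto.app_boundary α (IA.r A) hT
    refine ⟨Rauto, Auto.mkHom P Rauto eN econd, Auto.mkHom Rauto Q mN mcond, ?_, ?_, ?_⟩
    · have : ∀ X : WObj A, E (eN.app X) := by
        intro X
        cases X with
        | center => exact hec
        | left => exact hEM.E_iso _ (inferInstanceAs (IsIso (𝟙 (P.1.obj (IA.l A)))))
        | right => exact hEM.E_iso _ (inferInstanceAs (IsIso (𝟙 (P.1.obj (IA.r A)))))
      exact fun X => this X
    · have : ∀ X : WObj A, M (mN.app X) := by
        intro X
        cases X with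
        | center => exact hmc
        | left => exact hEM.M_iso _ (Auto.isIso_boundary α (IA.l A) (fun h => nomatch (show (WObj.left : WObj A) = WObj.center from h)))
        | right => exact hvr
      exact fun X => this X
    · apply Auto.hom_ext
      apply NatTrans.ext
      funext X
      have : ∀ X : WObj A, (eN ≫ mN).app X = αn.app X := by
        intro X
        cases X with
        | center => exact hfac
        | left => exact Category.id_comp _
        | right => exact Category.id_comp _
      exact this X
  case diagonal =>
    intro W X Y Z u v f g hu hv hsq
    have sq : ∀ T : WObj A,
        (Auto.nat u).app T ≫ (Auto.nat g).app T =
        (Auto.nat f).app T ≫ (Auto.nat v).app T := by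
      intro T
      exact congr_fun (congrArg NatTrans.app (congrArg Auto.nat hsq)) T
    choose d hd using fun T : WObj A => hEM.diagonal _ _ _ _ (hu T) (hv T) (sq T)
    -- naturality of the componentwise diagonal
    have key : ∀ {T T' : IA A} (p : T ⟶ T'),
        X.1.map p ≫ d T' = d T ≫ Y.1.map p := by
      intro T T' p
      obtain ⟨d0, -, huniq⟩ := hEM.diagonal ((Auto.nat u).app T) ((Auto.nat v).app T')
        ((Auto.nat f).app T ≫ Y.1.map p) ((Auto.nat g).app T ≫ Z.1.map p)
        (hu T) (hv T')
        (by
          calc (Auto.nat u).app T ≫ (Auto.nat g).app T ≫ Z.1.map p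
              = ((Auto.nat u).app T ≫ (Auto.nat g).app T) ≫ Z.1.map p := by
                rw [Category.assoc]
            _ = ((Auto.nat f).app T ≫ (Auto.nat v).app T) ≫ Z.1.map p := by rw [sq T]
            _ = (Auto.nat f).app T ≫ (Auto.nat v).app T ≫ Z.1.map p := by
                rw [Category.assoc]
            _ = (Auto.nat f).app T ≫ Y.1.map p ≫ (Auto.nat v).app T' := by
                rw [← (Auto.nat v).naturality]
            _ = ((Auto.nat f).app T ≫ Y.1.map p) ≫ (Auto.nat v).app T' := by
                rw [Category.assoc])
      have h1 : X.1.map p ≫ d T' = d0 := by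
        apply huniq
        constructor
        · calc (Auto.nat u).app T ≫ X.1.map p ≫ d T'
              = ((Auto.nat u).app T ≫ X.1.map p) ≫ d T' := by rw [Category.assoc]
            _ = (W.1.map p ≫ (Auto.nat u).app T') ≫ d T' := by
                rw [← (Auto.nat u).naturality]
            _ = W.1.map p ≫ (Auto.nat u).app T' ≫ d T' := by rw [Category.assoc]
            _ = W.1.map p ≫ (Auto.nat f).app T' := by rw [(hd T').1.1]
            _ = (Auto.nat f).app T ≫ Y.1.map p := (Auto.nat f).naturality p
        · calc (X.1.map p ≫ d T') ≫ (Auto.nat v).app T'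
              = X.1.map p ≫ d T' ≫ (Auto.nat v).app T' := by rw [Category.assoc]
            _ = X.1.map p ≫ (Auto.nat g).app T' := by rw [(hd T').1.2]
            _ = (Auto.nat g).app T ≫ Z.1.map p := (Auto.nat g).naturality p
      have h2 : d T ≫ Y.1.map p = d0 := by
        apply huniq
        constructor
        · calc (Auto.nat u).app T ≫ d T ≫ Y.1.map p
              = ((Auto.nat u).app T ≫ d T) ≫ Y.1.map p := by rw [Category.assoc]
            _ = (Auto.nat f).app T ≫ Y.1.map p := by rw [(hd T).1.1]
        · calc (d T ≫ Y.1.map p) ≫ (Auto.nat v).app T'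
              = d T ≫ Y.1.map p ≫ (Auto.nat v).app T' := by rw [Category.assoc]
            _ = d T ≫ (Auto.nat v).app T ≫ Z.1.map p := by rw [(Auto.nat v).naturality]
            _ = (d T ≫ (Auto.nat v).app T) ≫ Z.1.map p := by rw [Category.assoc]
            _ = (Auto.nat g).app T ≫ Z.1.map p := by rw [(hd T).1.2]
      exact h1.trans h2.symm
    let dN : X.1 ⟶ Y.1 := { app := d, naturality := fun _ _ p => key p }
    have dcond : CategoryTheory.Functor.whiskerLeft (OA.inc A) dN =
        eqToHom (X.2.trans Y.2.symm) := by
      refine Auto.whisker_cond X Y dN ?_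
      intro T
      have hT : T.1 ≠ IA.c A := T.2
      refine ((hd T.1).2 _ ⟨?_, ?_⟩).symm
      · rw [Auto.app_boundary u T.1 hT, Auto.app_boundary f T.1 hT]; exact eqToHom_trans _ _
      · rw [Auto.app_boundary v T.1 hT, Auto.app_boundary g T.1 hT]; exact eqToHom_trans _ _
    refine ⟨Auto.mkHom X Y dN dcond, ⟨?_, ?_⟩, ?_⟩
    · apply Auto.hom_ext
      apply NatTrans.ext
      funext T
      exact (hd T).1.1
    · apply Auto.hom_ext
      apply NatTrans.ext
      funext T
      exact (hd T).1.2
    · intro d' hd'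
      apply Auto.hom_ext
      apply NatTrans.ext
      funext T
      refine (hd T).2 _ ⟨?_, ?_⟩
      · exact congr_fun (congrArg NatTrans.app (congrArg Auto.nat hd'.1)) T
      · exact congr_fun (congrArg NatTrans.app (congrArg Auto.nat hd'.2)) T
end

section
/- The map φ : B* × Irr(A,B) + 1 → (B* + 1)^{A*} defined by φ(u, K) = u ⋆ K and φ(⊥) = ⊥fun is a bijection, whose inverse sends every K ≠ ⊥fun to (lcp(K), red(K)) and sends ⊥fun to ⊥. -/
/-! ### Longest common prefixes, reductions and irreducible partial functions -/

/-- The everywhere-undefined partial function `⊥fun : A* ⇀ B*`. -/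
def botfun (A B : Type) : List A → Option (List B) := fun _ => none

/-- `w` is a common prefix of all defined values of `K`. -/
def IsCommonPrefix {A B : Type} (w : List B) (K : List A → Option (List B)) : Prop :=
  ∀ u v, K u = some v → w <+: v

open Classical in
/-- The longest common prefix `lcp(K)` of all defined values of `K` (well defined whenever
`K ≠ ⊥fun`). -/
noncomputable def lcp {A B : Type} (K : List A → Option (List B)) : List B :=
  if h : ∃ w, IsCommonPrefix w K ∧ ∀ w', IsCommonPrefix w' K → w'.length ≤ w.length
  then h.choose else []

/-- The reduction of `K`: `red(K)(u) = v` when `K(u) = lcp(K) · v`, and `⊥` otherwise. -/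
noncomputable def red {A B : Type} (K : List A → Option (List B)) :
    List A → Option (List B) :=
  fun u => (K u).map (fun v => v.drop (lcp K).length)

theorem exists_ne_none_of_ne_botfun {A B : Type} {K : List A → Option (List B)}
    (h : K ≠ botfun A B) : ∃ u v, K u = some v := by
  by_contra hc
  push_neg at hc
  apply h
  funext u
  rcases hK : K u with _ | v
  · rfl
  · exact absurd hK (hc u v)

theorem exists_longest_common_prefix {A B : Type} {K : List A → Option (List B)}
    (h : K ≠ botfun A B) :
    ∃ w, IsCommonPrefix w K ∧ ∀ w', IsCommonPrefix w' K → w'.length ≤ w.length := by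
  classical
  obtain ⟨u, v, huv⟩ := exists_ne_none_of_ne_botfun h
  set P : ℕ → Prop := fun n => ∃ w, IsCommonPrefix w K ∧ w.length = n with hP
  have hbound : ∀ w, IsCommonPrefix w K → w.length ≤ v.length :=
    fun w hw => (hw u v huv).length_le
  have hspec : P (Nat.findGreatest P v.length) :=
    Nat.findGreatest_spec (m := 0) (Nat.zero_le _) ⟨[], fun _ _ _ => List.nil_prefix, rfl⟩
  obtain ⟨w₀, hw₀, hlen⟩ := hspec
  refine ⟨w₀, hw₀, fun w' hw' => ?_⟩
  have := Nat.le_findGreatest (P := P) (hbound w' hw') ⟨w', hw', rfl⟩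
  omega

theorem lcp_spec {A B : Type} {K : List A → Option (List B)} (h : K ≠ botfun A B) :
    IsCommonPrefix (lcp K) K ∧ ∀ w, IsCommonPrefix w K → w.length ≤ (lcp K).length := by
  classical
  have hex := exists_longest_common_prefix h
  rw [lcp, dif_pos hex]
  exact hex.choose_spec

theorem red_ne_botfun {A B : Type} {K : List A → Option (List B)} (h : K ≠ botfun A B) :
    red K ≠ botfun A B := by
  obtain ⟨u, v, huv⟩ := exists_ne_none_of_ne_botfun h
  intro hbad
  have : red K u = none := congrFun hbad u
  simp [red, huv] at this

theorem lcp_red {A B : Type} {K : List A → Option (List B)} (h : K ≠ botfun A B) :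
    lcp (red K) = [] := by
  have hrb := red_ne_botfun h
  have hred := lcp_spec hrb
  have hK := lcp_spec h
  have hcommon : IsCommonPrefix (lcp K ++ lcp (red K)) K := by
    intro u v huv
    obtain ⟨t, ht⟩ := hK.1 u v huv
    have h2 : red K u = some (v.drop (lcp K).length) := by simp [red, huv]
    have hdrop : v.drop (lcp K).length = t := by rw [← ht]; simp
    rw [hdrop] at h2
    obtain ⟨s, hs⟩ := hred.1 u t h2
    exact ⟨s, by rw [List.append_assoc, hs, ht]⟩
  have hle := hK.2 _ hcommon
  rw [List.length_append] at hle
  have : (lcp (red K)).length = 0 := by omega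
  exact List.eq_nil_of_length_eq_zero this

/-- The irreducible partial functions: those `K ≠ ⊥fun` with `lcp(K) = ε`. -/
def Irr (A B : Type) : Type :=
  { K : List A → Option (List B) // K ≠ botfun A B ∧ lcp K = [] }

/-- For `K ≠ ⊥fun`, the decomposition `(lcp K, red K)`, with `red K` irreducible. -/
noncomputable def toIrr {A B : Type} (K : List A → Option (List B)) (h : K ≠ botfun A B) :
    List B × Irr A B :=
  (lcp K, ⟨red K, red_ne_botfun h, lcp_red h⟩)

/-- `v ⋆ K`: prepend `v` to every defined value of `K`. -/
def star {A B : Type} (v : List B) (K : List A → Option (List B)) :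
    List A → Option (List B) :=
  fun u => (K u).map (fun x => v ++ x)

/-- The map `φ : B* × Irr(A,B) + 1 → (B* + 1)^{A*}`, sending `(v, K)` to `v ⋆ K` and
`⊥` to `⊥fun`. -/
def phi (A B : Type) : Option (List B × Irr A B) → (List A → Option (List B))
  | none => botfun A B
  | some (v, K) => star v K.1

theorem star_lcp_red {A B : Type} {K : List A → Option (List B)} (h : K ≠ botfun A B) :
    star (lcp K) (red K) = K := by
  funext u
  rcases hK : K u with _ | v
  · simp [_root_.star, red, hK]
  · obtain ⟨t, ht⟩ := (lcp_spec h).1 u v hK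
    have hdrop : v.drop (lcp K).length = t := by rw [← ht]; simp
    simp [_root_.star, red, hK, hdrop, ht]

theorem star_ne_botfun {A B : Type} {K : List A → Option (List B)} (h : K ≠ botfun A B)
    (v : List B) : star v K ≠ botfun A B := by
  obtain ⟨u, x, hux⟩ := exists_ne_none_of_ne_botfun h
  intro hbad
  have : star v K u = none := congrFun hbad u
  simp [_root_.star, hux] at this

theorem lcp_star {A B : Type} {K : List A → Option (List B)} (h : K ≠ botfun A B)
    (hirr : lcp K = []) (v : List B) : lcp (star v K) = v := by
  have hsb := star_ne_botfun h v
  have hs := lcp_spec hsb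
  have hv : IsCommonPrefix v (star v K) := by
    intro u x hx
    rcases hK : K u with _ | y
    · simp [_root_.star, hK] at hx
    · simp [_root_.star, hK] at hx
      exact ⟨y, hx⟩
  obtain ⟨u, y, huy⟩ := exists_ne_none_of_ne_botfun h
  have hsu : star v K u = some (v ++ y) := by simp [_root_.star, huy]
  have h1 : lcp (star v K) <+: v ++ y := hs.1 u (v ++ y) hsu
  have h2 : v <+: v ++ y := List.prefix_append v y
  have hlen : v.length ≤ (lcp (star v K)).length := hs.2 v hv
  have hvp : v <+: lcp (star v K) := by
    exact List.prefix_of_prefix_length_le h2 h1 hlen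
  obtain ⟨t, ht⟩ := hvp
  have hct : IsCommonPrefix t K := by
    intro u' x hx
    have hsu' : star v K u' = some (v ++ x) := by simp [_root_.star, hx]
    have := hs.1 u' (v ++ x) hsu'
    rw [← ht] at this
    exact (List.prefix_append_right_inj v).mp this
  have := (lcp_spec h).2 t hct
  rw [hirr] at this
  simp at this
  rw [← ht, this, List.append_nil]

theorem red_star {A B : Type} {K : List A → Option (List B)} (h : K ≠ botfun A B)
    (hirr : lcp K = []) (v : List B) : red (star v K) = K := by
  have hl := lcp_star h hirr v
  funext u
  rcases hK : K u with _ | x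
  · simp [red, _root_.star, hK]
  · simp [red, _root_.star, hK, hl]

/-- `φ` is a bijection, whose inverse sends `⊥fun` to `⊥` and every `K ≠ ⊥fun` to
`(lcp K, red K)`. -/
theorem phi_bijective (A B : Type) :
    Function.Bijective (phi A B) ∧
    (∀ t, phi A B t = botfun A B → t = none) ∧
    (∀ K, K ≠ botfun A B → ∀ t, phi A B t = K →
      ∃ p : List B × Irr A B, t = some p ∧ p.1 = lcp K ∧ (p.2 : Irr A B).1 = red K) := by
  refine ⟨⟨?_, ?_⟩, ?_, ?_⟩
  · rintro (_ | ⟨v, K⟩) (_ | ⟨v', K'⟩) h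
    · rfl
    · exact absurd h.symm (star_ne_botfun K'.2.1 v')
    · exact absurd h (star_ne_botfun K.2.1 v)
    · simp only [phi] at h
      have hv : v = v' := by
        rw [← lcp_star K.2.1 K.2.2 v, h, lcp_star K'.2.1 K'.2.2 v']
      have hK : K.1 = K'.1 := by
        rw [← red_star K.2.1 K.2.2 v, h, red_star K'.2.1 K'.2.2 v']
      cases Subtype.ext hK
      cases hv
      rfl
  · intro K
    by_cases h : K = botfun A B
    · exact ⟨none, h.symm⟩
    · exact ⟨some (lcp K, ⟨red K, red_ne_botfun h, lcp_red h⟩), star_lcp_red h⟩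
  · rintro (_ | ⟨v, K⟩) h
    · rfl
    · exact absurd h (star_ne_botfun K.2.1 v)
  · intro K hK t ht
    rcases t with _ | ⟨v, K'⟩
    · exact absurd ht.symm hK
    · refine ⟨(v, K'), rfl, ?_, ?_⟩
      · rw [← ht]
        exact (lcp_star K'.2.1 K'.2.2 v).symm
      · rw [← ht]
        exact (red_star K'.2.1 K'.2.2 v).symm
end

section
/- (E_Kl, M_Kl) is a factorization system on the Kleisli category Kl(T) of the monad T X = B* × X + 1: every Kleisli morphism f : X ⇸ Y factors as f = m ∘ e (Kleisli composition) with e ∈ E_Kl and m ∈ M_Kl, both classes contain all isomorphisms and are closed under composition, and for every commuting square g ∘ e = m ∘ f in Kl(T) with e ∈ E_Kl and m ∈ M_Kl there exists a unique diagonal d with d ∘ e = f and m ∘ d = g. -/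
open CategoryTheory CategoryTheory.Limits

universe v u

/-! ### The transducer monad `T X = B* × X + 1` and its Kleisli category -/

/-- The monad `T X = B* × X + 1` (implemented as `Option (List B × X)`,
with `none` playing the role of `⊥ ∈ 1`). -/
def TM (B : Type) (X : Type) : Type := Option (List B × X)

namespace TM

variable {B : Type}

/-- `⊥` : the element of `1` in `T X = B* × X + 1`. -/
def bot {X : Type} : TM B X := (none : Option (List B × X))

/-- `(w, x)` as an element of `T X`. -/
def el {X : Type} (w : List B) (x : X) : TM B X := (some (w, x) : Option (List B × X))

/-- The unit of the monad: `x ↦ (ε, x)`. -/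
def unit {X : Type} (x : X) : TM B X := el [] x

/-- The bind operation of the monad, corresponding to the multiplication
`(w, (u, x)) ↦ (wu, x)`, everything else going to `⊥`. -/
def bindT {X Y : Type} (t : TM B X) (f : X → TM B Y) : TM B Y :=
  Option.bind (t : Option (List B × X)) fun p =>
    Option.map (fun q => (p.1 ++ q.1, q.2)) (f p.2 : Option (List B × Y))

instance : Monad (TM B) where
  pure := unit
  bind := bindT

instance : LawfulMonad (TM B) := by
  apply LawfulMonad.mk' (m := TM B)
  · intro α t
    show bindT t (fun x => unit x) = t
    rcases (t : Option (List B × α)) with _ | ⟨w, x⟩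
    · rfl
    · simp [bindT, unit, el] <;> rfl
  · intro α β x f
    show bindT (unit x) f = f x
    rcases hf : (f x : Option (List B × β)) with _ | ⟨u, y⟩ <;>
      simp [bindT, unit, el, hf] <;> rfl
  · intro α β γ t f g
    show bindT (bindT t f) g = bindT t fun x => bindT (f x) g
    rcases (t : Option (List B × α)) with _ | ⟨w, x⟩
    · rfl
    · rcases hf : (f x : Option (List B × β)) with _ | ⟨u, y⟩
      · simp [bindT, hf] <;> rfl
      · rcases hg : (g y : Option (List B × γ)) with _ | ⟨v, z⟩ <;>
          simp [bindT, hf, hg] <;> rfl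

end TM

/-- The Kleisli category `Kl(T)` of the monad `T X = B* × X + 1`. -/
abbrev KlT (B : Type) := CategoryTheory.KleisliCat (TM B)

/-- The projection `π₁(f) : X → B* + 1` of a Kleisli morphism `f : X ⇸ Y`. -/
def pi1 {B X Y : Type} (f : X → TM B Y) : X → Option (List B) :=
  fun x => Option.map Prod.fst (f x : Option (List B × Y))

/-- The projection `π₂(f) : X → Y + 1` of a Kleisli morphism `f : X ⇸ Y`. -/
def pi2 {B X Y : Type} (f : X → TM B Y) : X → Option Y :=
  fun x => Option.map Prod.snd (f x : Option (List B × Y))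

/-- The class `E_Kl` of Kleisli morphisms `e` with `π₂(e)` surjective onto `Y`. -/
def EKl {B : Type} {X Y : KlT B} (f : X ⟶ Y) : Prop :=
  ∀ y : Y, ∃ x : X, pi2 f x = some y

/-- The class `M_Kl` of Kleisli morphisms `m` with `π₂(m)` injective and `π₁(m)`
constantly `ε`. -/
def MKl {B : Type} {X Y : KlT B} (f : X ⟶ Y) : Prop :=
  Function.Injective (pi2 f) ∧ ∀ x : X, pi1 f x = some ([] : List B)

section Aux

variable {B : Type}

lemma klt_comp_apply {X Y Z : KlT B} (f : X ⟶ Y) (g : Y ⟶ Z) (x : X) :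
    (f ≫ g) x = TM.bindT (f x) g := rfl

lemma klt_id_apply {X : KlT B} (x : X) : (𝟙 X : X ⟶ X) x = TM.unit x := rfl

/-- bindT computation when `t = some (w, x)`. -/
lemma bindT_some {X Y : Type} (w : List B) (x : X) (g : X → TM B Y) :
    TM.bindT (B := B) (some (w, x) : Option (List B × X)) g
      = Option.map (fun q => (w ++ q.1, q.2)) (g x : Option (List B × Y)) := rfl

lemma bindT_none {X Y : Type} (g : X → TM B Y) :
    TM.bindT (B := B) (none : Option (List B × X)) g = TM.bot := rfl

lemma mkl_shape {X Y : KlT B} {m : X ⟶ Y} (hm : MKl m) (x : X) :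
    ∃ y : Y, (m x : Option (List B × Y)) = some ([], y) := by
  have h := hm.2 x
  rcases hx : (m x : Option (List B × Y)) with _ | ⟨l, y⟩
  · simp [pi1, hx] at h
  · refine ⟨y, ?_⟩
    simp [pi1, hx] at h
    simp [h] <;> rfl

lemma bind_eq_unit {X Y : Type} {t : TM B X} {g : X → TM B Y} {y : Y}
    (h : TM.bindT t g = TM.unit y) :
    ∃ x : X, (t : Option (List B × X)) = some ([], x) ∧
      (g x : Option (List B × Y)) = some ([], y) := by
  rcases ht : (t : Option (List B × X)) with _ | ⟨w, x⟩
  · rw [show t = (none : Option (List B × X)) from ht] at h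
    exact absurd h (by simp [TM.bindT, TM.unit, TM.el, TM.bot])
  · rw [show t = (some (w, x) : Option (List B × X)) from ht, bindT_some] at h
    rcases hg : (g x : Option (List B × Y)) with _ | ⟨u, z⟩
    · rw [hg] at h; exact absurd h (by simp [TM.unit, TM.el])
    · rw [hg] at h
      have h' : (some (w ++ u, z) : Option (List B × Y)) = some ([], y) := h
      simp at h'
      obtain ⟨⟨hw, hu⟩, hz⟩ := h'
      exact ⟨x, by simp [ht, hw] <;> rfl, by simp [hg, hu, hz] <;> rfl⟩

/-- `pi2` of a composition. -/
lemma pi2_comp {X Y Z : KlT B} (f : X ⟶ Y) (g : Y ⟶ Z) (x : X) :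
    pi2 (f ≫ g) x = Option.bind (pi2 f x) (pi2 g) := by
  simp only [pi2, klt_comp_apply]
  rcases hf : (f x : Option (List B × Y)) with _ | ⟨w, y⟩
  · rfl
  · rcases hg : (g y : Option (List B × Z)) with _ | ⟨u, z⟩ <;>
      erw [bindT_some, Option.map_map] <;> rfl

end Aux

section Aux2

variable {B : Type}

lemma pi2_eq_some {X Y : Type} {h : X → TM B Y} {x : X} {y : Y} :
    pi2 h x = some y ↔ ∃ w, (h x : Option (List B × Y)) = some (w, y) := by
  constructor
  · intro hy
    rcases hx : (h x : Option (List B × Y)) with _ | ⟨w, y'⟩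
    · simp [pi2, hx] at hy
    · simp [pi2, hx] at hy
      exact ⟨w, by rw [hy]⟩
  · rintro ⟨w, hw⟩
    simp [pi2, hw]

/-- An `M`-morphism is "monic pointwise": it can be cancelled on the right. -/
lemma mkl_cancel {X Y Z : KlT B} {v : Y ⟶ Z} (hv : MKl v) {d₁ d₂ : X ⟶ Y}
    (h : d₁ ≫ v = d₂ ≫ v) : d₁ = d₂ := by
  funext x
  have hx := congrFun h x
  rw [klt_comp_apply, klt_comp_apply] at hx
  show (d₁ x : Option (List B × Y)) = (d₂ x : Option (List B × Y))
  rcases h1 : (d₁ x : Option (List B × Y)) with _ | ⟨s₁, y₁⟩ <;>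
    rcases h2 : (d₂ x : Option (List B × Y)) with _ | ⟨s₂, y₂⟩
  · rfl
  · obtain ⟨z, hz⟩ := mkl_shape hv y₂
    erw [h1, h2, bindT_none, bindT_some, hz] at hx
    exact absurd hx (by simp [TM.bot])
  · obtain ⟨z, hz⟩ := mkl_shape hv y₁
    erw [h1, h2, bindT_some, bindT_none, hz] at hx
    exact absurd hx (by simp [TM.bot])
  · obtain ⟨z₁, hz₁⟩ := mkl_shape hv y₁
    obtain ⟨z₂, hz₂⟩ := mkl_shape hv y₂
    erw [h1, h2, bindT_some, bindT_some, hz₁, hz₂] at hx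
    simp only [Option.map_some, List.append_nil] at hx
    have hx' : (s₁, z₁) = (s₂, z₂) := Option.some.inj hx
    erw [Prod.mk.injEq] at hx'
    have hy : y₁ = y₂ := hv.1 (by simp [pi2, hz₁, hz₂, hx'.2])
    rw [hx'.1, hy]

lemma pmap_none' {α β : Type} {p : α → Prop} (f : ∀ a, p a → β) {o : Option α}
    (H : ∀ a, a ∈ o → p a) (h : o = none) : Option.pmap f o H = none := by
  subst h; rfl

lemma pmap_some' {α β : Type} {p : α → Prop} (f : ∀ a, p a → β) {o : Option α}
    (H : ∀ a, a ∈ o → p a) {a : α} (h : o = some a) :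
    ∃ hp : p a, Option.pmap f o H = some (f a hp) := by
  subst h; exact ⟨H a rfl, rfl⟩

/-- The image object for the factorization. -/
def imgObj {X Y : KlT B} (f : X ⟶ Y) : KlT B := {y : Y // ∃ x, pi2 f x = some y}

/-- The `E`-part of the factorization. -/
def imgE {X Y : KlT B} (f : X ⟶ Y) : X ⟶ imgObj f := fun x =>
  (Option.pmap (p := fun q : List B × Y => ∃ x', pi2 f x' = some q.2)
    (fun q hq => (q.1, (⟨q.2, hq⟩ : imgObj f))) (f x : Option (List B × Y))
    (fun q hq => ⟨x, by simp [pi2, Option.mem_def.mp hq] <;> rfl⟩) : Option (List B × imgObj f))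

/-- The `M`-part of the factorization. -/
def imgM {X Y : KlT B} (f : X ⟶ Y) : imgObj f ⟶ Y := fun z =>
  (some ([], z.val) : Option (List B × Y))

/-- The diagonal fill-in morphism. -/
noncomputable def diagMap {X Y X' Y' : KlT B} (u : X ⟶ Y) (f : X ⟶ X') (g : Y ⟶ Y')
    (hu : EKl u) : Y ⟶ X' := fun y =>
  (Option.bind (g y : Option (List B × Y'))
    (fun q => Option.map (fun p => (q.1, p.2))
      (f (Classical.choose (hu y)) : Option (List B × X'))) : TM B X')

end Aux2

/-- `(E_Kl, M_Kl)` is a factorization system on the Kleisli category `Kl(T)` of the monad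
`T X = B* × X + 1`. -/
theorem eklmkl_factorization_system (B : Type) :
    IsFactorizationSystem (KlT B) (fun _ _ f => EKl f) (fun _ _ f => MKl f) := by
  constructor
  -- E contains isos
  · intro X Y f hf
    intro y
    have h := congrFun (IsIso.inv_hom_id f) y
    rw [klt_comp_apply, klt_id_apply] at h
    obtain ⟨x, _, hfx⟩ := bind_eq_unit h
    exact ⟨x, by simp [pi2, hfx] <;> rfl⟩
  -- M contains isos
  · intro X Y f hf
    constructor
    · intro x₁ x₂ hx
      have h₁ := congrFun (IsIso.hom_inv_id f) x₁
      have h₂ := congrFun (IsIso.hom_inv_id f) x₂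
      rw [klt_comp_apply, klt_id_apply] at h₁ h₂
      obtain ⟨y₁, hf₁, hg₁⟩ := bind_eq_unit h₁
      obtain ⟨y₂, hf₂, hg₂⟩ := bind_eq_unit h₂
      have hy : y₁ = y₂ := by
        simp only [pi2, hf₁, hf₂, Option.map_some] at hx
        exact Option.some.inj hx
      rw [hy] at hg₁
      rw [hg₁] at hg₂
      have := Option.some.inj hg₂
      exact (Prod.mk.inj this).2
    · intro x
      have h := congrFun (IsIso.hom_inv_id f) x
      rw [klt_comp_apply, klt_id_apply] at h
      obtain ⟨y, hfx, _⟩ := bind_eq_unit h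
      simp [pi1, hfx]
  -- E closed under composition
  · intro X Y Z f g hf hg z
    obtain ⟨y, hy⟩ := hg z
    obtain ⟨x, hx⟩ := hf y
    exact ⟨x, by erw [pi2_comp, hx, Option.bind_some, hy]⟩
  -- M closed under composition
  · intro X Y Z f g hf hg
    constructor
    · intro x₁ x₂ hx
      obtain ⟨y₁, hy₁⟩ := mkl_shape hf x₁
      obtain ⟨y₂, hy₂⟩ := mkl_shape hf x₂
      rw [pi2_comp, pi2_comp] at hx
      simp only [pi2, hy₁, hy₂, Option.map_some, Option.bind_some] at hx
      have hy : y₁ = y₂ := hg.1 hx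
      apply hf.1
      simp [pi2, hy₁, hy₂, hy]
    · intro x
      obtain ⟨y, hy⟩ := mkl_shape hf x
      obtain ⟨z, hz⟩ := mkl_shape hg y
      have : ((f ≫ g) x : Option (List B × Z)) = some ([], z) := by
        erw [klt_comp_apply, hy, bindT_some, hz]
        rfl
      simp [pi1, this]
  -- factorization
  · intro X Y f
    refine ⟨imgObj f, imgE f, imgM f, ?_, ?_, ?_⟩
    · rintro ⟨y, x, hx⟩
      obtain ⟨w, hw⟩ := pi2_eq_some.mp hx
      obtain ⟨hp, he⟩ := pmap_some' (p := fun q : List B × Y => ∃ x', pi2 f x' = some q.2)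
        (fun q hq => (q.1, (⟨q.2, hq⟩ : imgObj f)))
        (fun q hq => ⟨x, by simp [pi2, Option.mem_def.mp hq] <;> rfl⟩) hw
      have he' : (imgE f x : Option (List B × imgObj f)) = some (w, ⟨y, hp⟩) := he
      exact ⟨x, by simp [pi2, he'] <;> rfl⟩
    · constructor
      · intro z₁ z₂ hz
        simp only [pi2, imgM, Option.map_some] at hz
        exact Subtype.ext (Option.some.inj hz)
      · intro z
        simp [pi1, imgM]
    · funext x
      rw [klt_comp_apply]
      rcases hx : (f x : Option (List B × Y)) with _ | ⟨w, y⟩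
      · have he := pmap_none' (p := fun q : List B × Y => ∃ x', pi2 f x' = some q.2)
          (fun q hq => (q.1, (⟨q.2, hq⟩ : imgObj f)))
          (fun q hq => ⟨x, by simp [pi2, Option.mem_def.mp hq] <;> rfl⟩) hx
        erw [show (imgE f x : Option (List B × imgObj f)) = Option.pmap _ _ _ from rfl, he,
          bindT_none]
        rfl
      · obtain ⟨hp, he⟩ := pmap_some' (p := fun q : List B × Y => ∃ x', pi2 f x' = some q.2)
          (fun q hq => (q.1, (⟨q.2, hq⟩ : imgObj f)))
          (fun q hq => ⟨x, by simp [pi2, Option.mem_def.mp hq] <;> rfl⟩) hx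
        erw [show (imgE f x : Option (List B × imgObj f)) = Option.pmap _ _ _ from rfl, he,
          bindT_some]
        simp [imgM] <;> rfl
  -- diagonal fill-in
  · intro X Y X' Y' u v f g hu hv hsq
    classical
    -- for each `x, w, y` with `u x = (w, y)`, analyze the commuting square at `x`
    have key : ∀ (x : X) (w : List B) (y : Y),
        (u x : Option (List B × Y)) = some (w, y) →
        ((g y : Option (List B × Y')) = none ∧ (f x : Option (List B × X')) = none) ∨
        (∃ s' y' x', (g y : Option (List B × Y')) = some (s', y') ∧
          (f x : Option (List B × X')) = some (w ++ s', x') ∧ pi2 v x' = some y') := by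
      intro x w y hxy
      have h := congrFun hsq x
      erw [klt_comp_apply, klt_comp_apply, hxy, bindT_some] at h
      rcases hgy : (g y : Option (List B × Y')) with _ | ⟨s', y'⟩
      · left
        rw [hgy, Option.map_none] at h
        rcases hfx : (f x : Option (List B × X')) with _ | ⟨s, x'⟩
        · exact ⟨rfl, rfl⟩
        · obtain ⟨z, hz⟩ := mkl_shape hv x'
          erw [hfx, bindT_some, hz] at h
          exact absurd h (by simp)
      · right
        rw [hgy, Option.map_some] at h
        rcases hfx : (f x : Option (List B × X')) with _ | ⟨s, x'⟩
        · erw [hfx, bindT_none] at h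
          exact absurd h (by simp [TM.bot])
        · obtain ⟨z, hz⟩ := mkl_shape hv x'
          erw [hfx, bindT_some, hz] at h
          simp only [Option.map_some, List.append_nil] at h
          have h' := Option.some.inj h
          erw [Prod.mk.injEq] at h'
          refine ⟨s', y', x', rfl, ?_, ?_⟩
          · rw [← h'.1]
          · simp [pi2, hz, ← h'.2] <;> rfl
    have hch : ∀ y : Y, pi2 u (Classical.choose (hu y)) = some y :=
      fun y => Classical.choose_spec (hu y)
    have hdv : diagMap u f g hu ≫ v = g := by
      funext y
      rw [klt_comp_apply]
      obtain ⟨w₀, hx₀⟩ := pi2_eq_some.mp (hch y)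
      rcases key _ w₀ y hx₀ with ⟨hgy, hfx₀⟩ | ⟨s', y', x₀', hgy, hfx₀, hvx₀⟩
      · rw [show (diagMap u f g hu y : Option (List B × X')) =
            Option.bind (g y : Option (List B × Y')) _ from rfl, hgy]
        rw [show TM.bindT (B := B) (Option.none.bind _) v = TM.bot from rfl]
        rfl
      · obtain ⟨z, hz⟩ := mkl_shape hv x₀'
        have hzy : z = y' := by
          have : pi2 v x₀' = some z := by simp [pi2, hz] <;> rfl
          exact Option.some.inj (this.symm.trans hvx₀)
        rw [show (diagMap u f g hu y : Option (List B × X')) =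
            Option.bind (g y : Option (List B × Y')) (fun q =>
              Option.map (fun p => (q.1, p.2))
                (f (Classical.choose (hu y)) : Option (List B × X'))) from rfl,
          hgy, hfx₀]
        rw [show (Option.bind (some (s', y')) fun q => Option.map
            (fun p => (q.1, p.2)) (some (w₀ ++ s', x₀'))) = some (s', x₀') from rfl]
        erw [bindT_some, hz]
        simp [hzy] <;> rfl
    refine ⟨diagMap u f g hu, ⟨?_, hdv⟩,
      fun d' hd' => mkl_cancel hv (hd'.2.trans hdv.symm)⟩
    · -- u ≫ d = f
      funext x
      rw [klt_comp_apply]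
      rcases hux : (u x : Option (List B × Y)) with _ | ⟨w, y⟩
      · -- u x = ⊥, so f x = ⊥ by the square
        have h := congrFun hsq x
        erw [klt_comp_apply, klt_comp_apply, hux, bindT_none] at h
        rcases hfx : (f x : Option (List B × X')) with _ | ⟨s, x'⟩
        · rfl
        · obtain ⟨z, hz⟩ := mkl_shape hv x'
          erw [hfx, bindT_some, hz] at h
          exact absurd h (by simp [TM.bot])
      · obtain ⟨w₀, hx₀⟩ := pi2_eq_some.mp (hch y)
        erw [bindT_some]
        rcases key x w y hux with ⟨hgy, hfx⟩ | ⟨s', y', x', hgy, hfx, hvx⟩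
        · rw [show (diagMap u f g hu y : Option (List B × X')) =
              Option.bind (g y : Option (List B × Y')) _ from rfl, hgy, hfx]
          rfl
        · rcases key _ w₀ y hx₀ with ⟨hgy₀, _⟩ | ⟨s'', y'', x₀', hgy₀, hfx₀, hvx₀⟩
          · rw [hgy] at hgy₀; exact absurd hgy₀ (by simp)
          · rw [hgy] at hgy₀
            have h' := Option.some.inj hgy₀
            erw [Prod.mk.injEq] at h'
            have hx'' : x₀' = x' := by
              apply hv.1
              rw [hvx₀, hvx, ← h'.2]
            rw [show (diagMap u f g hu y : Option (List B × X')) =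
              Option.bind (g y : Option (List B × Y')) (fun q =>
                Option.map (fun p => (q.1, p.2))
                  (f (Classical.choose (hu y)) : Option (List B × X'))) from rfl,
              hgy, hfx₀, hfx]
            simp [← h'.1, hx''] <;> rfl
end

section
/- Let N be a nondeterministic finite automaton over an alphabet A accepting a language L ⊆ A*. Then the deterministic automaton determinize(transpose(determinize(transpose(N)))) accepts L, is reachable (every state is reachable from the initial state by some input word), and is observable (distinct states accept distinct residual languages); consequently it is a minimal deterministic automaton for L, i.e., its states are in bijection with the left quotients { w⁻¹L | w ∈ A* } of L, compatibly with initial state, transitions, and acceptance. -/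
/-! ### Brzozowski's minimization algorithm -/

/-- A nondeterministic automaton over an alphabet `A`: a set of states, sets of initial and
final states, and a transition relation. -/
structure NAut (A : Type) where
  Q : Type
  start : Set Q
  final : Set Q
  step : Q → A → Q → Prop

/-- Acceptance from a state: there is a run along the word ending in a final state. -/
def NAut.AccFrom {A : Type} (N : NAut A) : N.Q → List A → Prop
  | q, [] => q ∈ N.final
  | q, a :: w => ∃ q', N.step q a q' ∧ N.AccFrom q' w

/-- The language of `N`: words having an accepting run from some initial state. -/
def NAut.Accepts {A : Type} (N : NAut A) (w : List A) : Prop :=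
  ∃ q ∈ N.start, N.AccFrom q w

/-- `transpose(N)`: reverse all transitions and swap initial and final states. -/
def NAut.transpose {A : Type} (N : NAut A) : NAut A where
  Q := N.Q
  start := N.final
  final := N.start
  step q a q' := N.step q' a q

/-- A deterministic automaton. -/
structure DAut (A : Type) where
  Q : Type
  start : Q
  final : Q → Prop
  step : Q → A → Q

/-- The state reached from `q` after reading `w`. -/
def DAut.run {A : Type} (M : DAut A) (q : M.Q) (w : List A) : M.Q :=
  w.foldl M.step q

/-- The language of a deterministic automaton. -/
def DAut.Accepts {A : Type} (M : DAut A) (w : List A) : Prop :=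
  M.final (M.run M.start w)

/-- One step of the subset construction. -/
def NAut.post {A : Type} (N : NAut A) (S : Set N.Q) (a : A) : Set N.Q :=
  { q' | ∃ q ∈ S, N.step q a q' }

/-- The set of states reachable from a state in `S` along the word `w`. -/
def NAut.postRun {A : Type} (N : NAut A) (S : Set N.Q) (w : List A) : Set N.Q :=
  w.foldl N.post S

theorem NAut.postRun_append_singleton {A : Type} (N : NAut A) (S : Set N.Q) (w : List A)
    (a : A) : N.postRun S (w ++ [a]) = N.post (N.postRun S w) a := by
  simp [NAut.postRun, List.foldl_append]

/-- `determinize(N)`: the subset construction restricted to the subsets reachable from the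
set of initial states. -/
def NAut.determinize {A : Type} (N : NAut A) : DAut A where
  Q := { S : Set N.Q // ∃ w, N.postRun N.start w = S }
  start := ⟨N.start, [], rfl⟩
  final S := ∃ q ∈ S.1, q ∈ N.final
  step S a := ⟨N.post S.1 a, by
    obtain ⟨w, hw⟩ := S.2
    exact ⟨w ++ [a], by rw [N.postRun_append_singleton, hw]⟩⟩

/-- A deterministic automaton regarded as a nondeterministic one. -/
def DAut.toNAut {A : Type} (M : DAut A) : NAut A where
  Q := M.Q
  start := {M.start}
  final := { q | M.final q }
  step q a q' := M.step q a = q'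

/-- Brzozowski's algorithm: `determinize ∘ transpose ∘ determinize ∘ transpose`. -/
def brzozowski {A : Type} (N : NAut A) : DAut A :=
  (((N.transpose).determinize).toNAut.transpose).determinize


theorem DAut.run_append' {A : Type} (M : DAut A) (q : M.Q) (w v : List A) :
    M.run q (w ++ v) = M.run (M.run q w) v := List.foldl_append ..

theorem NAut.postRun_cons' {A : Type} (N : NAut A) (S : Set N.Q) (a : A) (w : List A) :
    N.postRun S (a :: w) = N.postRun (N.post S a) w := rfl

theorem NAut.determinize_run_val {A : Type} (N : NAut A) (q : N.determinize.Q) (w : List A) :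
    ((N.determinize).run q w).1 = N.postRun q.1 w := by
  induction w generalizing q with
  | nil => rfl
  | cons a w ih => exact ih _

theorem NAut.accFrom_postRun {A : Type} (N : NAut A) (w : List A) (S : Set N.Q) :
    (∃ q ∈ S, N.AccFrom q w) ↔ ∃ q ∈ N.postRun S w, q ∈ N.final := by
  induction w generalizing S with
  | nil => simp [NAut.AccFrom, NAut.postRun]
  | cons a w ih =>
    rw [NAut.postRun_cons', ← ih]
    simp only [NAut.AccFrom]
    constructor
    · rintro ⟨q, hq, q', hst, hacc⟩
      exact ⟨q', ⟨q, hq, hst⟩, hacc⟩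
    · rintro ⟨q', ⟨q, hq, hst⟩, hacc⟩
      exact ⟨q, hq, q', hst, hacc⟩

theorem NAut.transpose_accFrom {A : Type} (N : NAut A) (w : List A) (q : N.Q) :
    N.transpose.AccFrom q w ↔ q ∈ N.postRun N.start w.reverse := by
  induction w generalizing q with
  | nil => exact Iff.rfl
  | cons a w ih =>
    simp only [NAut.AccFrom, List.reverse_cons, NAut.postRun_append_singleton]
    constructor
    · rintro ⟨q', hst, hacc⟩
      exact ⟨q', (ih q').mp hacc, hst⟩
    · rintro ⟨q', hq', hst⟩
      exact ⟨q', hst, (ih q').mpr hq'⟩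

theorem NAut.transpose_accepts {A : Type} (N : NAut A) (w : List A) :
    N.transpose.Accepts w ↔ N.Accepts w.reverse := by
  simp only [NAut.Accepts]
  rw [N.accFrom_postRun]
  constructor
  · rintro ⟨q, hf, hacc⟩
    exact ⟨q, (N.transpose_accFrom w q).mp hacc, hf⟩
  · rintro ⟨q, hq, hf⟩
    exact ⟨q, hf, (N.transpose_accFrom w q).mpr hq⟩

theorem NAut.determinize_accepts {A : Type} (N : NAut A) (w : List A) :
    (N.determinize).Accepts w ↔ N.Accepts w := by
  show (∃ q ∈ ((N.determinize).run (N.determinize).start w).1, q ∈ N.final) ↔ _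
  rw [N.determinize_run_val, ← N.accFrom_postRun]
  exact Iff.rfl

theorem DAut.transpose_postRun {A : Type} (D : DAut A) (T : Set D.Q) (w : List A) :
    (D.toNAut.transpose).postRun T w = { q | D.run q w.reverse ∈ T } := by
  induction w generalizing T with
  | nil => exact Set.setOf_mem_eq.symm
  | cons a w ih =>
    erw [NAut.postRun_cons', ih]
    ext q
    show D.run q w.reverse ∈ (D.toNAut.transpose).post T a ↔ D.run q (a :: w).reverse ∈ T
    rw [List.reverse_cons, DAut.run_append']
    show (∃ p ∈ T, D.step (D.run q w.reverse) a = p) ↔ D.step (D.run q w.reverse) a ∈ T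
    exact ⟨fun ⟨p, hp, hst⟩ => hst ▸ hp, fun h => ⟨_, h, rfl⟩⟩

/-- Correctness of Brzozowski's algorithm: for a nondeterministic automaton `N` accepting
the language `L`, the resulting deterministic automaton accepts `L`, is reachable and
observable, and is minimal: its states are in bijection with the left quotients of `L`,
compatibly with the initial state, the transitions and acceptance. -/
theorem brzozowski_correct {A : Type} (N : NAut A) (L : Set (List A))
    (hL : ∀ w, N.Accepts w ↔ w ∈ L) :
    (∀ w, (brzozowski N).Accepts w ↔ w ∈ L) ∧
    (∀ q : (brzozowski N).Q, ∃ w, (brzozowski N).run (brzozowski N).start w = q) ∧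
    (∀ q q' : (brzozowski N).Q,
      (∀ w, (brzozowski N).final ((brzozowski N).run q w) ↔
            (brzozowski N).final ((brzozowski N).run q' w)) → q = q') ∧
    ∃ e : (brzozowski N).Q ≃ { K : Set (List A) // ∃ w, K = { v | w ++ v ∈ L } },
      (e (brzozowski N).start).1 = L ∧
      (∀ (q : (brzozowski N).Q) (a : A),
        (e ((brzozowski N).step q a)).1 = { v | a :: v ∈ (e q).1 }) ∧
      (∀ q : (brzozowski N).Q, (brzozowski N).final q ↔ [] ∈ (e q).1) := by
  have hD1 : ∀ u, ((N.transpose).determinize).Accepts u ↔ u.reverse ∈ L := fun u =>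
    ((N.transpose).determinize_accepts u).trans ((N.transpose_accepts u).trans (hL u.reverse))
  have key : ∀ (S : (brzozowski N).Q) (v : List A),
      (brzozowski N).final ((brzozowski N).run S v) ↔
      ((N.transpose).determinize).run ((N.transpose).determinize).start v.reverse ∈ S.1 := by
    intro S v
    show (∃ q ∈ ((brzozowski N).run S v).1, q ∈ _) ↔ _
    simp only [brzozowski]
    erw [NAut.determinize_run_val, DAut.transpose_postRun]
    constructor
    · rintro ⟨q, hq, hf⟩
      exact hf ▸ hq
    · intro h
      exact ⟨_, h, rfl⟩
  have key2 : ∀ (S : (brzozowski N).Q) (w : List A),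
      ((((N.transpose).determinize).toNAut.transpose).postRun
        (((N.transpose).determinize).toNAut.transpose).start w = S.1) →
      ∀ v, ((brzozowski N).final ((brzozowski N).run S v) ↔ w ++ v ∈ L) := by
    intro S w hw v
    erw [key S v, ← hw, DAut.transpose_postRun]
    show ((N.transpose).determinize).final (((N.transpose).determinize).run
        (((N.transpose).determinize).run ((N.transpose).determinize).start v.reverse)
        w.reverse) ↔ _
    rw [← DAut.run_append']
    have h := hD1 (v.reverse ++ w.reverse)
    simpa [DAut.Accepts, List.reverse_append, List.reverse_reverse] using h
  have hacc : ∀ v, (brzozowski N).final ((brzozowski N).run (brzozowski N).start v) ↔ v ∈ L :=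
    fun v => key2 (brzozowski N).start [] rfl v
  have reachD1 : ∀ q : ((N.transpose).determinize).Q,
      ∃ u, ((N.transpose).determinize).run ((N.transpose).determinize).start u = q := by
    intro q
    obtain ⟨u, hu⟩ := q.2
    exact ⟨u, Subtype.ext (by rw [NAut.determinize_run_val]; exact hu)⟩
  have reachB : ∀ S : (brzozowski N).Q, ∃ w, (brzozowski N).run (brzozowski N).start w = S := by
    intro S
    obtain ⟨w, hw⟩ := S.2
    exact ⟨w, Subtype.ext (by
      simp only [brzozowski]
      rw [NAut.determinize_run_val]
      exact hw)⟩
  have obs : ∀ S S' : (brzozowski N).Q,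
      (∀ v, (brzozowski N).final ((brzozowski N).run S v) ↔
            (brzozowski N).final ((brzozowski N).run S' v)) → S = S' := by
    intro S S' h
    apply Subtype.ext
    ext q
    obtain ⟨u, hu⟩ := reachD1 q
    have h2 := h u.reverse
    rw [key S, key S', List.reverse_reverse, hu] at h2
    exact h2
  have resid : ∀ S : (brzozowski N).Q, ∃ w : List A,
      { v | (brzozowski N).final ((brzozowski N).run S v) } = { v | w ++ v ∈ L } := by
    intro S
    obtain ⟨w, hw⟩ := S.2
    exact ⟨w, Set.ext fun v => key2 S w hw v⟩
  refine ⟨fun w => hacc w, reachB, obs, ?_⟩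
  have hf : Function.Bijective (fun S : (brzozowski N).Q =>
      (⟨{ v | (brzozowski N).final ((brzozowski N).run S v) }, resid S⟩ :
        { K : Set (List A) // ∃ w, K = { v | w ++ v ∈ L } })) := by
    constructor
    · intro S S' hSS'
      apply obs
      intro v
      exact Set.ext_iff.mp (congrArg Subtype.val hSS') v
    · intro K
      obtain ⟨w, hK⟩ := K.2
      refine ⟨(brzozowski N).run (brzozowski N).start w, Subtype.ext ?_⟩
      show { v | (brzozowski N).final
        ((brzozowski N).run ((brzozowski N).run (brzozowski N).start w) v) } = K.1
      rw [hK]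
      ext v
      show (brzozowski N).final
        ((brzozowski N).run ((brzozowski N).run (brzozowski N).start w) v) ↔ _
      rw [← DAut.run_append']
      exact hacc (w ++ v)
  refine ⟨Equiv.ofBijective _ hf, ?_, ?_, ?_⟩
  · exact Set.ext fun v => hacc v
  · intro q a
    rfl
  · intro q
    exact Iff.rfl
end
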